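/- Pathwise uniqueness for the two-particle repulsive SDE: if (X₁, X₂) and (Y₁, Y₂) are two continuous solutions of dX_j = dB_j + (β/2) dt/(X_j − X_{3−j}) on [0, τ] driven by the same Brownian motions, with the same initial condition X₁(0) = Y₁(0) < X₂(0) = Y₂(0), β ≥ 1, and both solutions maintain X₁ < X₂ and Y₁ < Y₂ on [0, τ], then X = Y on [0, τ]. -/

import Mathlib

open Real intervalIntegral

/-- Pathwise uniqueness for the two-particle repulsive (Dyson) SDE with `β ≥ 1`:
two ordered continuous solutions driven by the same Brownian paths and with the
same initial condition coincide on `[0, τ]`. -/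
theorem dyson_two_particle_pathwise_uniqueness (β τ : ℝ) (hβ : 1 ≤ β) (hτ : 0 < τ)
    (B₁ B₂ X₁ X₂ Y₁ Y₂ : ℝ → ℝ)
    (hX₁c : ContinuousOn X₁ (Set.Icc 0 τ)) (hX₂c : ContinuousOn X₂ (Set.Icc 0 τ))
    (hY₁c : ContinuousOn Y₁ (Set.Icc 0 τ)) (hY₂c : ContinuousOn Y₂ (Set.Icc 0 τ))
    (hordX : ∀ t ∈ Set.Icc (0:ℝ) τ, X₁ t < X₂ t)
    (hordY : ∀ t ∈ Set.Icc (0:ℝ) τ, Y₁ t < Y₂ t)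
    (hinit₁ : X₁ 0 = Y₁ 0) (hinit₂ : X₂ 0 = Y₂ 0) (hinit : X₁ 0 < X₂ 0)
    (hX₁ : ∀ t ∈ Set.Icc (0:ℝ) τ,
      X₁ t = X₁ 0 + B₁ t + (β / 2) * ∫ s in (0:ℝ)..t, 1 / (X₁ s - X₂ s))
    (hX₂ : ∀ t ∈ Set.Icc (0:ℝ) τ,
      X₂ t = X₂ 0 + B₂ t + (β / 2) * ∫ s in (0:ℝ)..t, 1 / (X₂ s - X₁ s))
    (hY₁ : ∀ t ∈ Set.Icc (0:ℝ) τ,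
      Y₁ t = Y₁ 0 + B₁ t + (β / 2) * ∫ s in (0:ℝ)..t, 1 / (Y₁ s - Y₂ s))
    (hY₂ : ∀ t ∈ Set.Icc (0:ℝ) τ,
      Y₂ t = Y₂ 0 + B₂ t + (β / 2) * ∫ s in (0:ℝ)..t, 1 / (Y₂ s - Y₁ s)) :
    ∀ t ∈ Set.Icc (0:ℝ) τ, X₁ t = Y₁ t ∧ X₂ t = Y₂ t := by
  have hUpos : ∀ t ∈ Set.Icc (0:ℝ) τ, 0 < X₂ t - X₁ t :=
    fun t ht => sub_pos.mpr (hordX t ht)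
  have hVpos : ∀ t ∈ Set.Icc (0:ℝ) τ, 0 < Y₂ t - Y₁ t :=
    fun t ht => sub_pos.mpr (hordY t ht)
  -- flip identities
  have hflipX : (fun s => 1 / (X₁ s - X₂ s)) = fun s => -(1 / (X₂ s - X₁ s)) := by
    funext s
    rw [← neg_sub (X₂ s) (X₁ s), one_div_neg_eq_neg_one_div]
  have hflipY : (fun s => 1 / (Y₁ s - Y₂ s)) = fun s => -(1 / (Y₂ s - Y₁ s)) := by
    funext s
    rw [← neg_sub (Y₂ s) (Y₁ s), one_div_neg_eq_neg_one_div]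
  -- the sums satisfy the same explicit formula
  have hSX : ∀ t ∈ Set.Icc (0:ℝ) τ, X₁ t + X₂ t = X₁ 0 + X₂ 0 + (B₁ t + B₂ t) := by
    intro t ht
    have h1 := hX₁ t ht
    have h2 := hX₂ t ht
    rw [hflipX, intervalIntegral.integral_neg] at h1
    rw [h1, h2]; ring
  have hSY : ∀ t ∈ Set.Icc (0:ℝ) τ, Y₁ t + Y₂ t = Y₁ 0 + Y₂ 0 + (B₁ t + B₂ t) := by
    intro t ht
    have h1 := hY₁ t ht
    have h2 := hY₂ t ht
    rw [hflipY, intervalIntegral.integral_neg] at h1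
    rw [h1, h2]; ring
  -- the gaps
  have hU : ∀ t ∈ Set.Icc (0:ℝ) τ,
      X₂ t - X₁ t = (X₂ 0 - X₁ 0) + (B₂ t - B₁ t)
        + β * ∫ s in (0:ℝ)..t, 1 / (X₂ s - X₁ s) := by
    intro t ht
    have h1 := hX₁ t ht
    have h2 := hX₂ t ht
    rw [hflipX, intervalIntegral.integral_neg] at h1
    rw [h1, h2]; ring
  have hV : ∀ t ∈ Set.Icc (0:ℝ) τ,
      Y₂ t - Y₁ t = (Y₂ 0 - Y₁ 0) + (B₂ t - B₁ t)
        + β * ∫ s in (0:ℝ)..t, 1 / (Y₂ s - Y₁ s) := by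
    intro t ht
    have h1 := hY₁ t ht
    have h2 := hY₂ t ht
    rw [hflipY, intervalIntegral.integral_neg] at h1
    rw [h1, h2]; ring
  -- continuity of the drift integrands
  have hfUc : ContinuousOn (fun s => 1 / (X₂ s - X₁ s)) (Set.Icc 0 τ) :=
    continuousOn_const.div (hX₂c.sub hX₁c) (fun x hx => (hUpos x hx).ne')
  have hfVc : ContinuousOn (fun s => 1 / (Y₂ s - Y₁ s)) (Set.Icc 0 τ) :=
    continuousOn_const.div (hY₂c.sub hY₁c) (fun x hx => (hVpos x hx).ne')
  set f : ℝ → ℝ := fun s => 1 / (X₂ s - X₁ s) - 1 / (Y₂ s - Y₁ s) with hf_def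
  have hfc : ContinuousOn f (Set.Icc 0 τ) := hfUc.sub hfVc
  have hintU : ∀ t ∈ Set.Icc (0:ℝ) τ,
      IntervalIntegrable (fun s => 1 / (X₂ s - X₁ s)) MeasureTheory.volume 0 t := by
    intro t ht
    apply ContinuousOn.intervalIntegrable
    rw [Set.uIcc_of_le ht.1]
    exact hfUc.mono (Set.Icc_subset_Icc_right ht.2)
  have hintV : ∀ t ∈ Set.Icc (0:ℝ) τ,
      IntervalIntegrable (fun s => 1 / (Y₂ s - Y₁ s)) MeasureTheory.volume 0 t := by
    intro t ht
    apply ContinuousOn.intervalIntegrable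
    rw [Set.uIcc_of_le ht.1]
    exact hfVc.mono (Set.Icc_subset_Icc_right ht.2)
  have hintf : ∀ t ∈ Set.Icc (0:ℝ) τ,
      IntervalIntegrable f MeasureTheory.volume 0 t :=
    fun t ht => (hintU t ht).sub (hintV t ht)
  -- the difference of gaps
  have hD : ∀ t ∈ Set.Icc (0:ℝ) τ,
      (X₂ t - X₁ t) - (Y₂ t - Y₁ t) = β * ∫ s in (0:ℝ)..t, f s := by
    intro t ht
    have hsub : (∫ s in (0:ℝ)..t, f s)
        = (∫ s in (0:ℝ)..t, 1 / (X₂ s - X₁ s)) - ∫ s in (0:ℝ)..t, 1 / (Y₂ s - Y₁ s) :=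
      intervalIntegral.integral_sub (hintU t ht) (hintV t ht)
    rw [hU t ht, hV t ht, hinit₁, hinit₂, hsub]; ring
  -- derivative of the squared difference
  have hderivD : ∀ t ∈ Set.Ioo (0:ℝ) τ,
      HasDerivAt (fun u => (X₂ u - X₁ u) - (Y₂ u - Y₁ u)) (β * f t) t := by
    intro t ht
    have htIcc : t ∈ Set.Icc (0:ℝ) τ := Set.Ioo_subset_Icc_self ht
    have hnhds : Set.Icc (0:ℝ) τ ∈ nhds t := Icc_mem_nhds ht.1 ht.2
    have hca : ContinuousAt f t := hfc.continuousAt hnhds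
    have hmeas : StronglyMeasurableAtFilter f (nhds t) MeasureTheory.volume :=
      (hfc.mono Set.Ioo_subset_Icc_self).stronglyMeasurableAtFilter isOpen_Ioo _ ht
    have H := intervalIntegral.integral_hasDerivAt_right (hintf t htIcc) hmeas hca
    have H2 : HasDerivAt (fun u => β * ∫ s in (0:ℝ)..u, f s) (β * f t) t := by
      simpa [mul_comm] using H.const_mul β
    exact H2.congr_of_eventuallyEq
      (Filter.eventuallyEq_of_mem hnhds (fun x hx => hD x hx))
  have hderivg : ∀ t ∈ Set.Ioo (0:ℝ) τ,
      HasDerivAt (fun u => ((X₂ u - X₁ u) - (Y₂ u - Y₁ u)) ^ 2)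
        (2 * ((X₂ t - X₁ t) - (Y₂ t - Y₁ t)) ^ 1 * (β * f t)) t :=
    fun t ht => (hderivD t ht).pow 2
  have hderiv_nonpos : ∀ t ∈ Set.Ioo (0:ℝ) τ,
      2 * ((X₂ t - X₁ t) - (Y₂ t - Y₁ t)) ^ 1 * (β * f t) ≤ 0 := by
    intro t ht
    have htIcc : t ∈ Set.Icc (0:ℝ) τ := Set.Ioo_subset_Icc_self ht
    have hu := hUpos t htIcc
    have hv := hVpos t htIcc
    have hft : f t = -(((X₂ t - X₁ t) - (Y₂ t - Y₁ t)) / ((X₂ t - X₁ t) * (Y₂ t - Y₁ t))) := by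
      rw [hf_def]
      field_simp
      ring
    rw [hft]
    have hβ0 : (0:ℝ) < β := lt_of_lt_of_le one_pos hβ
    have h1 : 0 < (X₂ t - X₁ t) * (Y₂ t - Y₁ t) := mul_pos hu hv
    have h2 : 0 ≤ ((X₂ t - X₁ t) - (Y₂ t - Y₁ t)) ^ 2 / ((X₂ t - X₁ t) * (Y₂ t - Y₁ t)) :=
      div_nonneg (sq_nonneg _) h1.le
    have : 2 * ((X₂ t - X₁ t) - (Y₂ t - Y₁ t)) ^ 1
        * (β * -(((X₂ t - X₁ t) - (Y₂ t - Y₁ t)) / ((X₂ t - X₁ t) * (Y₂ t - Y₁ t))))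
        = -(2 * β * (((X₂ t - X₁ t) - (Y₂ t - Y₁ t)) ^ 2 / ((X₂ t - X₁ t) * (Y₂ t - Y₁ t)))) := by
      ring
    rw [this]
    have : 0 ≤ 2 * β * (((X₂ t - X₁ t) - (Y₂ t - Y₁ t)) ^ 2 / ((X₂ t - X₁ t) * (Y₂ t - Y₁ t))) := by
      positivity
    linarith
  -- antitone squared difference
  have hgc : ContinuousOn (fun u => ((X₂ u - X₁ u) - (Y₂ u - Y₁ u)) ^ 2) (Set.Icc 0 τ) :=
    ((hX₂c.sub hX₁c).sub (hY₂c.sub hY₁c)).pow 2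
  have hanti : AntitoneOn (fun u => ((X₂ u - X₁ u) - (Y₂ u - Y₁ u)) ^ 2) (Set.Icc 0 τ) := by
    apply antitoneOn_of_deriv_nonpos (convex_Icc 0 τ) hgc
    · rw [interior_Icc]
      intro t ht
      exact (hderivg t ht).differentiableAt.differentiableWithinAt
    · rw [interior_Icc]
      intro t ht
      rw [(hderivg t ht).deriv]
      exact hderiv_nonpos t ht
  have hD0 : ∀ t ∈ Set.Icc (0:ℝ) τ, (X₂ t - X₁ t) - (Y₂ t - Y₁ t) = 0 := by
    intro t ht
    have h0 : (0:ℝ) ∈ Set.Icc (0:ℝ) τ := ⟨le_refl 0, hτ.le⟩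
    have hle := hanti h0 ht ht.1
    have hz : ((X₂ 0 - X₁ 0) - (Y₂ 0 - Y₁ 0)) ^ 2 = 0 := by
      rw [hinit₁, hinit₂]; ring
    have hge : 0 ≤ ((X₂ t - X₁ t) - (Y₂ t - Y₁ t)) ^ 2 := sq_nonneg _
    have : ((X₂ t - X₁ t) - (Y₂ t - Y₁ t)) ^ 2 = 0 := le_antisymm (hz ▸ hle) hge
    exact pow_eq_zero_iff (two_ne_zero) |>.mp this
  intro t ht
  have hsum : X₁ t + X₂ t = Y₁ t + Y₂ t := by
    rw [hSX t ht, hSY t ht, hinit₁, hinit₂]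
  have hdiff := hD0 t ht
  constructor <;> linarith
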